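/- Let n ≥ 4 and let t be a positive integer with ln n ≤ t ≤ √n. Fix x,y ∈ {0,1}^n, i ∈ [1..n], an integer g with 1 ≤ g ≤ 2t+1, a pattern p ∈ {0,1}^g, and d ∈ [−t..t] with i + d ≥ 1. Let S be the random subset of [1..n] obtained by including each row independently with probability (ln n)/t. Define: (1) i_{d,i} as the minimal r with i ≤ r ≤ n and r + d ≤ n such that Δ_H(x_{[i..r]}, y_{[i..r]+d}) > 4t, and I_{d,i} = {j ∈ [i..i_{d,i}] : x_j ≠ y_{j+d}}; (2) i_{x,p,i} as the minimal r with i ≤ r ≤ n such that |{j ∈ [i..r] : x_j ≠ p_{(((j−i) mod g)+1)}}| > 4t, and I_{x,p,i} = {j ∈ [i..i_{x,p,i}] : x_j ≠ p_{(((j−i) mod g)+1)}}; (3) i_{y,p,i} and I_{y,p,i} analogously with y in place of x. In each of the three cases, if no such minimal index exists then the corresponding bad event is empty; otherwise the bad event is that S does not intersect the corresponding mismatch set (I_{d,i}, I_{x,p,i}, or I_{y,p,i} respectively). Then each of the three bad events has probability less than 1/(9n(2t+1)). -/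

import Mathlib

/-!
Statement 15 (generalized bad sampling events).  Strings `x, y ∈ {0,1}^n` are
modelled as functions `ℤ → Bool` on positions `1..n`, and the pattern
`p ∈ {0,1}^g` as `ℤ → Bool` on positions `1..g`.  The random set `S ⊆ [1..n]` is
modelled by a point `ω` of the product Bernoulli(`ln n / t`) space `Fin n → Bool`
(coordinate `k` decides whether row `k+1` is included).
-/

namespace Stmt15

open MeasureTheory
open scoped ENNReal

/-- Bernoulli measure on `Bool` with parameter `p` (a probability measure when
`0 ≤ p ≤ 1`). -/
noncomputable def bern (p : ℝ) : Measure Bool :=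
  ENNReal.ofReal p • Measure.dirac true + ENNReal.ofReal (1 - p) • Measure.dirac false

/-- Product measure: each of the `n` rows is sampled independently with probability `p`. -/
noncomputable def sampleMeasure (n : ℕ) (p : ℝ) : Measure (Fin n → Bool) :=
  Measure.pi fun _ => bern p

/-- The sampled set of rows `S ⊆ [1..n]`: the rows `k+1` for which `ω k` is true. -/
def rowsOf (n : ℕ) (ω : Fin n → Bool) : Set ℤ :=
  {j : ℤ | ∃ k : Fin n, ω k = true ∧ j = (k : ℕ) + 1}

/-- Hamming distance between `x_{[a..b]}` and `y_{[a..b]+d}`. -/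
noncomputable def hamOn (x y : ℤ → Bool) (d a b : ℤ) : ℕ :=
  ((Finset.Icc a b).filter fun j => x j ≠ y (j + d)).card

/-- Number of positions `j ∈ [a..b]` where `z` deviates from the periodic string
with pattern `p` (of length `g`) started at position `a`. -/
noncomputable def perMismatch (z : ℤ → Bool) (p : ℤ → Bool) (g : ℕ) (a b : ℤ) : ℕ :=
  ((Finset.Icc a b).filter fun j => z j ≠ p ((j - a) % (g : ℤ) + 1)).card

instance (p : ℝ) : IsFiniteMeasure (bern p) := by
  constructor
  simp [bern]

lemma bern_false (p : ℝ) : bern p {false} = ENNReal.ofReal (1 - p) := by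
  simp [bern, Measure.dirac_apply]

lemma bern_univ (p : ℝ) (h0 : 0 ≤ p) (h1 : p ≤ 1) : bern p Set.univ = 1 := by
  simp [bern]
  rw [← ENNReal.ofReal_add h0 (by linarith)]
  simp

lemma avoid_eq (n : ℕ) (q : ℝ) (h0 : 0 ≤ q) (h1 : q ≤ 1) (K : Finset (Fin n)) :
    sampleMeasure n q {ω | ∀ k ∈ K, ω k = false} = ENNReal.ofReal (1 - q) ^ K.card := by
  have : {ω : Fin n → Bool | ∀ k ∈ K, ω k = false}
      = Set.pi Set.univ (fun k => if k ∈ K then {false} else Set.univ) := by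
    ext ω
    simp only [Set.mem_setOf_eq, Set.mem_pi, Set.mem_univ, true_implies]
    constructor
    · intro h k; by_cases hk : k ∈ K <;> simp [hk]
      exact h k hk
    · intro h k hk; have := h k; simpa [hk] using this
  rw [sampleMeasure, this, Measure.pi_pi]
  have : ∀ k : Fin n, bern q (if k ∈ K then ({false} : Set Bool) else Set.univ)
      = if k ∈ K then ENNReal.ofReal (1 - q) else 1 := by
    intro k; by_cases hk : k ∈ K
    · rw [if_pos hk, if_pos hk, bern_false]
    · rw [if_neg hk, if_neg hk, bern_univ q h0 h1]
  simp_rw [this]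
  rw [Finset.prod_ite_mem Finset.univ K, Finset.univ_inter, Finset.prod_const]

lemma nat_ineq (n t : ℕ) (hn : 4 ≤ n) (ht : 1 ≤ t) (htn : t * t ≤ n) :
    9 * n * (2 * t + 1) < n ^ 4 := by
  have h1 : 1024 ≤ n ^ 5 := by calc (1024:ℕ) = 4 ^ 5 := by norm_num
                                    _ ≤ n ^ 5 := Nat.pow_le_pow_left hn 5
  have h2 : (27 * t) ^ 2 < (n ^ 3) ^ 2 := by
    have : 729 * (t * t) ≤ 729 * n := Nat.mul_le_mul_left _ htn
    calc (27 * t)^2 = 729 * (t*t) := by ring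
      _ ≤ 729 * n := this
      _ < 1024 * n := by
          have h : 0 < n := by omega
          omega
      _ ≤ n ^ 5 * n := Nat.mul_le_mul_right n h1
      _ = (n ^ 3) ^ 2 := by ring
  have h3 : 27 * t < n ^ 3 := by
    by_contra h; push_neg at h; exact absurd (Nat.pow_le_pow_left h 2) (by omega)
  calc 9 * n * (2 * t + 1) ≤ 9 * n * (3 * t) := by
        have : 2 * t + 1 ≤ 3 * t := by omega
        exact Nat.mul_le_mul_left _ this
    _ = n * (27 * t) := by ring
    _ < n * n ^ 3 := by
        have hn0 : 0 < n := by omega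
        exact (Nat.mul_lt_mul_left hn0).2 h3
    _ = n ^ 4 := by ring

lemma key (n t : ℕ) (hn : 4 ≤ n) (ht : 1 ≤ t)
    (hlog : Real.log n ≤ (t : ℝ)) (hsqrt : (t : ℝ) ≤ Real.sqrt n)
    (i : ℤ) (hi : 1 ≤ i)
    (M : ℤ → Prop) [DecidablePred M] (Q : ℤ → Prop)
    (hQ : ∀ r, Q r → i ≤ r ∧ r ≤ (n : ℤ) ∧ 4 * t < ((Finset.Icc i r).filter M).card) :
    sampleMeasure n (Real.log n / t)
      {ω | ∃ r : ℤ, Q r ∧ (∀ r', Q r' → r ≤ r') ∧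
        ∀ j, i ≤ j → j ≤ r → M j → j ∉ rowsOf n ω}
      < 1 / (9 * (n : ℝ≥0∞) * (2 * (t : ℝ≥0∞) + 1)) := by
  classical
  set N : ℕ := 9 * n * (2 * t + 1) with hN
  have hNpos : 0 < N := by positivity
  have hcast : (9 * (n : ℝ≥0∞) * (2 * (t : ℝ≥0∞) + 1)) = (N : ℝ≥0∞) := by
    push_cast [hN]; ring
  have hbound : (1 : ℝ≥0∞) / (9 * (n : ℝ≥0∞) * (2 * (t : ℝ≥0∞) + 1))
      = ENNReal.ofReal (1 / (N : ℝ)) := by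
    rw [hcast, one_div, ← ENNReal.ofReal_natCast N,
      ← ENNReal.ofReal_inv_of_pos (by exact_mod_cast hNpos), one_div]
  by_cases hex : ∃ r, Q r
  · obtain ⟨r₀, hQ0, hleast⟩ :=
      Int.exists_least_of_bdd (P := Q) ⟨i, fun z hz => (hQ z hz).1⟩ hex
    obtain ⟨hir₀, hr₀n, hcardJ⟩ := hQ r₀ hQ0
    set K : Finset (Fin n) :=
      Finset.univ.filter (fun k : Fin n => i ≤ (k : ℤ) + 1 ∧ (k : ℤ) + 1 ≤ r₀ ∧ M ((k : ℤ) + 1))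
      with hK
    have hlt : ∀ j ∈ (Finset.Icc i r₀).filter M, (j - 1).toNat < n := by
      intro j hj
      simp only [Finset.mem_filter, Finset.mem_Icc] at hj
      omega
    have hcardK : ((Finset.Icc i r₀).filter M).card = K.card := by
      apply Finset.card_bij' (i := fun j hj => (⟨(j - 1).toNat, hlt j hj⟩ : Fin n))
        (j := fun k _ => (k : ℤ) + 1)
      · intro j hj
        have h := hj
        simp only [Finset.mem_filter, Finset.mem_Icc] at h
        simp only [hK, Finset.mem_filter, Finset.mem_univ, true_and]
        have hco : (((j - 1).toNat : ℤ)) + 1 = j := by omega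
        refine ⟨?_, ?_, ?_⟩ <;> simp only [hco]
        · exact h.1.1
        · exact h.1.2
        · exact h.2
      · intro j hj
        simp only [Finset.mem_filter, Finset.mem_Icc] at hj
        simp only [Fin.val_mk]
        omega
      · intro k hk
        apply Fin.ext
        simp
      · intro k hk
        simp only [hK, Finset.mem_filter, Finset.mem_univ, true_and] at hk
        simp only [Finset.mem_filter, Finset.mem_Icc]
        exact ⟨⟨hk.1, hk.2.1⟩, hk.2.2⟩
    have hcard : 4 * t < K.card := hcardK ▸ hcardJ
    have hsub : {ω : Fin n → Bool | ∃ r : ℤ, Q r ∧ (∀ r', Q r' → r ≤ r') ∧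
        ∀ j, i ≤ j → j ≤ r → M j → j ∉ rowsOf n ω} ⊆ {ω | ∀ k ∈ K, ω k = false} := by
      rintro ω ⟨r, hQr, hmin, havoid⟩ k hk
      simp only [hK, Finset.mem_filter, Finset.mem_univ, true_and] at hk
      have hr : r₀ ≤ r := hleast r hQr
      have hnot := havoid ((k : ℤ) + 1) hk.1 (hk.2.1.trans hr) hk.2.2
      by_contra hb
      have hωk : ω k = true := by
        cases hc : ω k
        · exact absurd hc hb
        · rfl
      exact hnot ⟨k, hωk, rfl⟩
    set q : ℝ := Real.log n / t with hq
    have hn1 : (1:ℝ) ≤ n := by exact_mod_cast (by omega : 1 ≤ n)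
    have ht' : (0:ℝ) < t := by exact_mod_cast ht
    have hq0 : 0 ≤ q := div_nonneg (Real.log_nonneg hn1) ht'.le
    have hq1 : q ≤ 1 := (div_le_one ht').2 hlog
    have htn : t * t ≤ n := by
      have h1 : (t:ℝ) * t ≤ Real.sqrt n * Real.sqrt n :=
        mul_le_mul hsqrt hsqrt (by positivity) (Real.sqrt_nonneg _)
      rw [Real.mul_self_sqrt (by positivity)] at h1
      exact_mod_cast h1
    have hNn4 : (N:ℝ) < (n:ℝ)^4 := by exact_mod_cast nat_ineq n t hn ht htn
    have hreal : (1 - q) ^ (4*t) < 1 / (N:ℝ) := by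
      have h1 : (1 - q) ≤ Real.exp (-q) := by
        have := Real.add_one_le_exp (-q); linarith
      have h2 : (1 - q) ^ (4*t) ≤ Real.exp (-q) ^ (4*t) :=
        pow_le_pow_left₀ (by linarith) h1 _
      have h3 : Real.exp (-q) ^ (4*t) = Real.exp (-(4 * Real.log n)) := by
        rw [← Real.exp_nat_mul]
        congr 1
        rw [hq]
        push_cast
        field_simp
      have h4 : Real.exp (-(4 * Real.log n)) = 1 / (n:ℝ)^4 := by
        rw [show (4:ℝ) * Real.log n = Real.log ((n:ℝ)^4) by
              rw [Real.log_pow]; push_cast; ring,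
          Real.exp_neg, Real.exp_log (by positivity), one_div]
      have h5 : 1 / ((n:ℝ)^4) < 1 / (N:ℝ) :=
        one_div_lt_one_div_of_lt (by exact_mod_cast hNpos) hNn4
      calc (1 - q) ^ (4*t) ≤ Real.exp (-q) ^ (4*t) := h2
        _ = 1 / (n:ℝ)^4 := by rw [h3, h4]
        _ < 1 / (N:ℝ) := h5
    calc sampleMeasure n q {ω : Fin n → Bool | ∃ r : ℤ, Q r ∧ (∀ r', Q r' → r ≤ r') ∧
            ∀ j, i ≤ j → j ≤ r → M j → j ∉ rowsOf n ω}
        ≤ sampleMeasure n q {ω | ∀ k ∈ K, ω k = false} := measure_mono hsub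
      _ = ENNReal.ofReal (1 - q) ^ K.card := avoid_eq n q hq0 hq1 K
      _ ≤ ENNReal.ofReal (1 - q) ^ (4*t) :=
          pow_le_pow_of_le_one zero_le (ENNReal.ofReal_le_one.2 (by linarith)) hcard.le
      _ = ENNReal.ofReal ((1 - q) ^ (4*t)) := (ENNReal.ofReal_pow (by linarith) _).symm
      _ < ENNReal.ofReal (1 / (N:ℝ)) :=
          (ENNReal.ofReal_lt_ofReal_iff (by positivity)).2 hreal
      _ = 1 / (9 * (n : ℝ≥0∞) * (2 * (t : ℝ≥0∞) + 1)) := hbound.symm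
  · have : {ω : Fin n → Bool | ∃ r : ℤ, Q r ∧ (∀ r', Q r' → r ≤ r') ∧
        ∀ j, i ≤ j → j ≤ r → M j → j ∉ rowsOf n ω} = ∅ := by
      ext ω; simp only [Set.mem_setOf_eq, Set.mem_empty_iff_false, iff_false]
      rintro ⟨r, hr, -⟩; exact hex ⟨r, hr⟩
    rw [this, measure_empty, hbound]
    exact ENNReal.ofReal_pos.2 (by positivity)

theorem stmt15 (n t : ℕ) (hn : 4 ≤ n) (ht : 1 ≤ t)
    (hlog : Real.log n ≤ (t : ℝ)) (hsqrt : (t : ℝ) ≤ Real.sqrt n)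
    (x y : ℤ → Bool) (i : ℤ) (hi : 1 ≤ i) (hin : i ≤ (n : ℤ))
    (g : ℕ) (hg1 : 1 ≤ g) (hg2 : g ≤ 2 * t + 1) (p : ℤ → Bool)
    (d : ℤ) (hd1 : -(t : ℤ) ≤ d) (hd2 : d ≤ (t : ℤ)) (hid : 1 ≤ i + d) :
    sampleMeasure n (Real.log n / t)
        {ω | ∃ r : ℤ,
          (i ≤ r ∧ r ≤ (n : ℤ) ∧ r + d ≤ (n : ℤ) ∧ 4 * t < hamOn x y d i r) ∧
          (∀ r' : ℤ, (i ≤ r' ∧ r' ≤ (n : ℤ) ∧ r' + d ≤ (n : ℤ) ∧ 4 * t < hamOn x y d i r')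
            → r ≤ r') ∧
          ∀ j, i ≤ j → j ≤ r → x j ≠ y (j + d) → j ∉ rowsOf n ω}
      < 1 / (9 * (n : ℝ≥0∞) * (2 * (t : ℝ≥0∞) + 1)) ∧
    sampleMeasure n (Real.log n / t)
        {ω | ∃ r : ℤ,
          (i ≤ r ∧ r ≤ (n : ℤ) ∧ 4 * t < perMismatch x p g i r) ∧
          (∀ r' : ℤ, (i ≤ r' ∧ r' ≤ (n : ℤ) ∧ 4 * t < perMismatch x p g i r') → r ≤ r') ∧
          ∀ j, i ≤ j → j ≤ r → x j ≠ p ((j - i) % (g : ℤ) + 1) → j ∉ rowsOf n ω}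
      < 1 / (9 * (n : ℝ≥0∞) * (2 * (t : ℝ≥0∞) + 1)) ∧
    sampleMeasure n (Real.log n / t)
        {ω | ∃ r : ℤ,
          (i ≤ r ∧ r ≤ (n : ℤ) ∧ 4 * t < perMismatch y p g i r) ∧
          (∀ r' : ℤ, (i ≤ r' ∧ r' ≤ (n : ℤ) ∧ 4 * t < perMismatch y p g i r') → r ≤ r') ∧
          ∀ j, i ≤ j → j ≤ r → y j ≠ p ((j - i) % (g : ℤ) + 1) → j ∉ rowsOf n ω}
      < 1 / (9 * (n : ℝ≥0∞) * (2 * (t : ℝ≥0∞) + 1)) := by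
  classical
  refine ⟨?_, ?_, ?_⟩
  · exact key n t hn ht hlog hsqrt i hi (fun j => x j ≠ y (j + d))
      (fun r => i ≤ r ∧ r ≤ (n:ℤ) ∧ r + d ≤ (n:ℤ) ∧ 4 * t < hamOn x y d i r)
      (fun r hr => ⟨hr.1, hr.2.1, by
        simpa [hamOn, Finset.filter_congr_decidable] using hr.2.2.2⟩)
  · exact key n t hn ht hlog hsqrt i hi (fun j => x j ≠ p ((j - i) % (g:ℤ) + 1))
      (fun r => i ≤ r ∧ r ≤ (n:ℤ) ∧ 4 * t < perMismatch x p g i r)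
      (fun r hr => ⟨hr.1, hr.2.1, by
        simpa [perMismatch, Finset.filter_congr_decidable] using hr.2.2⟩)
  · exact key n t hn ht hlog hsqrt i hi (fun j => y j ≠ p ((j - i) % (g:ℤ) + 1))
      (fun r => i ≤ r ∧ r ≤ (n:ℤ) ∧ 4 * t < perMismatch y p g i r)
      (fun r hr => ⟨hr.1, hr.2.1, by
        simpa [perMismatch, Finset.filter_congr_decidable] using hr.2.2⟩)


end Stmt15
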